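/- Let A be a Noetherian ring, let a ∈ W(A) and b ∈ A. If for every P ∈ X₁(A) the image of b in the localization A_P belongs to the ideal aA_P, then b ∈ aA. Equivalently, regarding the localizations A_P (P ∈ X₁(A)) inside Q(A), one has ⋂_{P ∈ X₁(A)} A_P = A. -/

import Mathlib

open scoped TensorProduct

/-- `xs` is a regular sequence on `R`: for each `i`, the element `xs i` acts injectively
on `R / (xs 0, …, xs (i-1))`. -/
def IsRegularSeq (R : Type*) [CommRing R] (xs : List R) : Prop :=
  ∀ (i : ℕ) (h : i < xs.length),
    IsSMulRegular (R ⧸ Ideal.span {y : R | y ∈ xs.take i}) (xs.get ⟨i, h⟩)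

/-- For a Noetherian local ring `R`, `depth R ≥ n` holds iff there is a regular sequence
of length `n` consisting of elements of the maximal ideal. -/
def RingDepthGE (R : Type*) [CommRing R] [IsLocalRing R] (n : ℕ) : Prop :=
  ∃ xs : List R, xs.length = n ∧ (∀ x ∈ xs, x ∈ IsLocalRing.maximalIdeal R) ∧
    IsRegularSeq R xs

/-- If the image of `c` in `A_P` lies in `a A_P`, then `u c ∈ (a)` for some `u ∉ P`. -/
lemma exists_mul_mem_of_mem_span_loc {A : Type*} [CommRing A] (P : Ideal A) [P.IsPrime]
    (a c : A)
    (hc : algebraMap A (Localization.AtPrime P) c ∈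
      Ideal.span {algebraMap A (Localization.AtPrime P) a}) :
    ∃ u ∉ P, u * c ∈ Ideal.span {a} := by
  rw [Ideal.mem_span_singleton'] at hc
  obtain ⟨t, ht⟩ := hc
  obtain ⟨⟨r, s⟩, rfl⟩ := IsLocalization.mk'_surjective P.primeCompl t
  have h2 : algebraMap A (Localization.AtPrime P) (a * r) =
      algebraMap A (Localization.AtPrime P) (c * s) := by
    have := congrArg (· * algebraMap A (Localization.AtPrime P) s) ht
    simp only [map_mul] at this ⊢
    rw [← this, mul_comm (IsLocalization.mk' _ r s) (algebraMap A _ a), mul_assoc,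
      IsLocalization.mk'_spec]
  obtain ⟨u, hu⟩ := (IsLocalization.eq_iff_exists P.primeCompl _).mp h2
  refine ⟨u * s, fun hP => ?_, ?_⟩
  · rcases (Ideal.IsPrime.mem_or_mem ‹P.IsPrime› hP) with h | h
    · exact u.2 h
    · exact s.2 h
  · rw [Ideal.mem_span_singleton]
    exact ⟨u * r, by linear_combination -hu⟩

/-- If `a'` is a nonzerodivisor, `m w ⊆ (a')` and `w ∉ (a')`, then the depth of the local
ring `R` is at most 1 (the maximal ideal is associated to `R/(a')`). -/
lemma not_ringDepthGE_two {R : Type*} [CommRing R] [IsLocalRing R] (a' w : R)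
    (hreg : ∀ v : R, a' * v = 0 → v = 0)
    (hw : ∀ x ∈ IsLocalRing.maximalIdeal R, x * w ∈ Ideal.span {a'})
    (hnw : w ∉ Ideal.span {a'}) : ¬ RingDepthGE R 2 := by
  rintro ⟨xs, hlen, hmem, hrs⟩
  rcases xs with _ | ⟨x, _ | ⟨y, _ | ⟨z, l⟩⟩⟩ <;> simp only [List.length] at hlen <;>
    try omega
  have hx := hrs 0 (by simp)
  have hy := hrs 1 (by simp)
  simp only [List.get] at hx hy
  -- x is regular on R
  have hx' : ∀ v : R, x * v = 0 → v = 0 := by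
    intro v hv
    have hset : {t : R | t ∈ ([x, y].take 0)} = (∅ : Set R) := by simp
    have h1 : x • (Submodule.Quotient.mk v :
        R ⧸ Ideal.span {t : R | t ∈ ([x, y].take 0)}) = x • (0 : _) := by
      rw [smul_zero, ← Submodule.Quotient.mk_smul, smul_eq_mul, hv,
        Submodule.Quotient.mk_eq_zero]
      exact zero_mem _
    have h2 := hx h1
    rw [Submodule.Quotient.mk_eq_zero, hset, Ideal.span_empty, Ideal.mem_bot] at h2
    exact h2
  -- y is regular mod x
  have hy' : ∀ v : R, y * v ∈ Ideal.span {x} → v ∈ Ideal.span {x} := by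
    intro v hv
    have hset : Ideal.span {t : R | t ∈ ([x, y].take 1)} = Ideal.span {x} := by
      congr 1; ext t; simp
    have h1 : y • (Submodule.Quotient.mk v :
        R ⧸ Ideal.span {t : R | t ∈ ([x, y].take 1)}) = y • (0 : _) := by
      rw [smul_zero, ← Submodule.Quotient.mk_smul, smul_eq_mul,
        Submodule.Quotient.mk_eq_zero, hset]
      exact hv
    have h2 := hy h1
    rw [Submodule.Quotient.mk_eq_zero, hset] at h2
    exact h2
  obtain ⟨w1, hw1⟩ := Ideal.mem_span_singleton.mp (hw x (hmem x (by simp)))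
  obtain ⟨w2, hw2⟩ := Ideal.mem_span_singleton.mp (hw y (hmem y (by simp)))
  have key : y * w1 - x * w2 = 0 := by
    apply hreg
    linear_combination x * hw2 - y * hw1
  obtain ⟨u, hu⟩ := Ideal.mem_span_singleton.mp
    (hy' w1 (Ideal.mem_span_singleton.mpr ⟨w2, by linear_combination key⟩))
  have : w - a' * u = 0 := by
    apply hx'
    linear_combination hw1 + a' * hu
  exact hnw (Ideal.mem_span_singleton.mpr ⟨u, by linear_combination this⟩)

/-- Let `A` be Noetherian, `a ∈ W(A)` and `b ∈ A`.  If for every prime `P ∈ X₁(A)`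
(i.e. `depth A_P ≤ 1`) the image of `b` in `A_P` lies in `a A_P`, then `b ∈ a A`. -/
theorem mem_span_of_forall_X1 (A : Type*) [CommRing A] [IsNoetherianRing A]
    (a b : A) (ha : a ∈ nonZeroDivisors A)
    (h : ∀ (P : Ideal A) [P.IsPrime],
      ¬ RingDepthGE (Localization.AtPrime P) 2 →
      algebraMap A (Localization.AtPrime P) b ∈
        Ideal.span {algebraMap A (Localization.AtPrime P) a}) :
    b ∈ Ideal.span {a} := by
  by_contra hb
  have hb0 : (Ideal.Quotient.mk (Ideal.span {a}) b) ≠ 0 := fun h0 =>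
    hb (Ideal.Quotient.eq_zero_iff_mem.mp h0)
  obtain ⟨P, hPass, hPle⟩ :=
    exists_le_isAssociatedPrime_of_isNoetherianRing A _ hb0
  obtain ⟨hPp, z', hz'⟩ := isAssociatedPrime_iff.mp hPass
  obtain ⟨z, rfl⟩ := Ideal.Quotient.mk_surjective z'
  haveI := hPp
  -- P is exactly the set of `p` with `p z ∈ (a)`
  have hz1 : ∀ p ∈ P, p * z ∈ Ideal.span {a} := by
    intro p hp
    rw [hz'] at hp
    have := (Submodule.mem_bot _).mp (Submodule.mem_colon_singleton.mp hp)
    have h5 : Ideal.Quotient.mk (Ideal.span {a}) (p * z) = 0 := this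
    exact Ideal.Quotient.eq_zero_iff_mem.mp h5
  have hz2 : ∀ u : A, u * z ∈ Ideal.span {a} → u ∈ P := by
    intro u hu
    rw [hz']
    refine Submodule.mem_colon_singleton.mpr ((Submodule.mem_bot _).mpr ?_)
    show Ideal.Quotient.mk (Ideal.span {a}) (u * z) = 0
    exact Ideal.Quotient.eq_zero_iff_mem.mpr hu
  have hbP : ∀ u : A, u * b ∈ Ideal.span {a} → u ∈ P := by
    intro u hu
    refine hPle (Submodule.mem_colon_singleton.mpr ((Submodule.mem_bot _).mpr ?_))
    show Ideal.Quotient.mk (Ideal.span {a}) (u * b) = 0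
    exact Ideal.Quotient.eq_zero_iff_mem.mpr hu
  -- `a` is a nonzerodivisor in the localization
  have hreg : ∀ v : Localization.AtPrime P,
      algebraMap A (Localization.AtPrime P) a * v = 0 → v = 0 := by
    intro v hv
    obtain ⟨⟨r, s⟩, rfl⟩ := IsLocalization.mk'_surjective P.primeCompl v
    rw [IsLocalization.mul_mk'_eq_mk'_of_mul, IsLocalization.mk'_eq_zero_iff] at hv
    obtain ⟨t, ht⟩ := hv
    have htr : (t : A) * r = 0 := ha.2 _ (by linear_combination ht)
    rw [IsLocalization.mk'_eq_zero_iff]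
    exact ⟨t, htr⟩
  -- the maximal ideal multiplies the image of `z` into `(a)`
  have hw : ∀ x ∈ IsLocalRing.maximalIdeal (Localization.AtPrime P),
      x * algebraMap A (Localization.AtPrime P) z ∈
        Ideal.span {algebraMap A (Localization.AtPrime P) a} := by
    intro x hx
    rw [← Localization.AtPrime.map_eq_maximalIdeal] at hx
    obtain ⟨⟨⟨p, hp⟩, s⟩, hxs⟩ :=
      (IsLocalization.mem_map_algebraMap_iff P.primeCompl _).mp hx
    obtain ⟨c, hc⟩ := Ideal.mem_span_singleton.mp (hz1 p hp)
    obtain ⟨t, ht⟩ := IsLocalization.map_units (Localization.AtPrime P) s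
    have h3 : x * algebraMap A (Localization.AtPrime P) z * ↑t =
        algebraMap A (Localization.AtPrime P) a *
          algebraMap A (Localization.AtPrime P) c := by
      rw [ht, mul_right_comm, hxs, ← map_mul, ← map_mul, hc]
    rw [Ideal.mem_span_singleton]
    refine ⟨algebraMap A (Localization.AtPrime P) c * ↑t⁻¹, ?_⟩
    calc x * algebraMap A (Localization.AtPrime P) z
        = x * algebraMap A (Localization.AtPrime P) z * ↑t * ↑t⁻¹ := by
          rw [mul_assoc, ← Units.val_mul, mul_inv_cancel, Units.val_one, mul_one]
      _ = algebraMap A (Localization.AtPrime P) a *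
            (algebraMap A (Localization.AtPrime P) c * ↑t⁻¹) := by
          rw [h3, mul_assoc]
  -- the image of `z` is not in `(a)` locally
  have hnw : algebraMap A (Localization.AtPrime P) z ∉
      Ideal.span {algebraMap A (Localization.AtPrime P) a} := by
    intro hc
    obtain ⟨u, huP, hu⟩ := exists_mul_mem_of_mem_span_loc P a z hc
    exact huP (hz2 u hu)
  have hnd := not_ringDepthGE_two _ _ hreg hw hnw
  obtain ⟨u, huP, hu⟩ := exists_mul_mem_of_mem_span_loc P a b (h P hnd)
  exact huP (hbP u hu)
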